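/- Let k be a field and V a k-vector space. Let V_{i−1}, V_i, V′_i, V_{i+1} be subspaces with V_{i−1} ⊂ V_i ⊂ V_{i+1}, V_{i−1} ⊂ V′_i ⊂ V_{i+1}, finrank V_{i−1} = i−1, finrank V_i = finrank V′_i = i, finrank V_{i+1} = i+1, and V_i ≠ V′_i. Given nonzero volume forms ω_{i−1} ∈ ⋀^{i−1} V_{i−1}, ω_i ∈ ⋀^{i} V_i, and ω_{i+1} ∈ ⋀^{i+1} V_{i+1} (regarded in the exterior powers of V), there exists a unique ω′_i ∈ ⋀^{i} V′_i such that for some v ∈ V_i and v′ ∈ V′_i: ω_{i−1} ∧ v = ω_i, ω_{i−1} ∧ v′ = ω′_i, and ω_{i−1} ∧ v ∧ v′ = ω_{i+1}. Moreover this ω′_i is nonzero. -/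

import Mathlib

/-- The image of the `m`-th exterior power `⋀^m W` of a subspace `W ≤ V` inside the
exterior algebra of `V`, under the canonical map induced by the inclusion `W → V`. -/
noncomputable def extPowerImage (k : Type*) [Field k] {V : Type*} [AddCommGroup V]
    [Module k V] (m : ℕ) (W : Submodule k V) : Submodule k (ExteriorAlgebra k V) :=
  (Submodule.map (ExteriorAlgebra.ι k (M := V)) W) ^ m

section Aux

open ExteriorAlgebra

variable {k : Type*} [Field k] {V : Type*} [AddCommGroup V] [Module k V]

lemma ιMulti_snoc (m : ℕ) (b : Fin m → V) (x : V) :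
    ιMulti k (m + 1) (Fin.snoc b x) = ιMulti k m b * ι k x := by
  induction m with
  | zero =>
    rw [ιMulti_succ_apply]
    simp [Fin.snoc, ιMulti_zero_apply]
  | succ m ih =>
    have h0 : (Fin.snoc b x : Fin (m + 2) → V) 0 = b 0 := by
      simpa using Fin.snoc_castSucc (α := fun _ => V) (x := x) (p := b) (i := 0)
    have htail : Matrix.vecTail (Fin.snoc b x : Fin (m + 2) → V)
        = Fin.snoc (Matrix.vecTail b) x := by
      funext i
      refine Fin.lastCases ?_ (fun j => ?_) i
      · simp [Matrix.vecTail, Fin.succ_last, Fin.snoc_last]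
      · simp [Matrix.vecTail, Fin.snoc_castSucc]
        rw [Fin.succ_castSucc, Fin.snoc_castSucc]
    rw [ιMulti_succ_apply, h0, htail, ih, ← mul_assoc, ← ιMulti_succ_apply]

lemma range_snoc {m : ℕ} (b : Fin m → V) (x : V) :
    Set.range (Fin.snoc b x : Fin (m+1) → V) = insert x (Set.range b) := by
  ext y
  constructor
  · rintro ⟨i, rfl⟩
    refine Fin.lastCases ?_ (fun j => ?_) i
    · simp [Fin.snoc_last]
    · simp [Fin.snoc_castSucc]
  · rintro (rfl | ⟨i, rfl⟩)
    · exact ⟨Fin.last m, by simp [Fin.snoc_last]⟩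
    · exact ⟨i.castSucc, by simp [Fin.snoc_castSucc]⟩

lemma contract_ιMulti_zero (m : ℕ) (f : Module.Dual k V) (v : Fin m → V)
    (hf : ∀ i, f (v i) = 0) :
    CliffordAlgebra.contractLeft (Q := (0 : QuadraticForm k V)) f (ιMulti k m v) = 0 := by
  induction m with
  | zero =>
    rw [ιMulti_zero_apply]
    exact CliffordAlgebra.contractLeft_one _ _
  | succ m ih =>
    rw [ιMulti_succ_apply, CliffordAlgebra.contractLeft_ι_mul, hf 0, zero_smul,
      ih (Matrix.vecTail v) (fun i => hf i.succ), mul_zero, sub_zero]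

lemma ιMulti_ne_zero (m : ℕ) (v : Fin m → V) (hv : LinearIndependent k v) :
    ιMulti k m v ≠ 0 := by
  induction m with
  | zero =>
    rw [ιMulti_zero_apply]
    exact one_ne_zero
  | succ m ih =>
    classical
    -- find a dual functional
    have hinj : Function.Injective v := hv.injective
    have hs : LinearIndepOn k id (Set.range v) := hv.linearIndepOn_id
    have hmem : ∀ j : Fin (m+1), v j ∈ hs.extend (Set.subset_univ _) :=
      fun j => hs.subset_extend _ ⟨j, rfl⟩
    let f : Module.Dual k V := (Module.Basis.extend hs).coord ⟨v 0, hmem 0⟩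
    have hf : ∀ j, f (v j) = if j = 0 then 1 else 0 := by
      intro j
      have : v j = Module.Basis.extend hs ⟨v j, hmem j⟩ := (Module.Basis.extend_apply_self hs ⟨v j, hmem j⟩).symm
      rw [this]
      simp only [f, Module.Basis.coord_apply, Module.Basis.repr_self]
      rw [Finsupp.single_apply]
      by_cases hj : j = 0
      · subst hj; simp
      · rw [if_neg, if_neg hj]
        intro hc
        exact hj (hinj (Subtype.ext_iff.mp hc))
    have htail : LinearIndependent k (Matrix.vecTail v) :=
      hv.comp Fin.succ (Fin.succ_injective _)
    intro h0
    have := congrArg (CliffordAlgebra.contractLeft (Q := (0 : QuadraticForm k V)) f) h0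
    rw [ιMulti_succ_apply, CliffordAlgebra.contractLeft_ι_mul,
      contract_ιMulti_zero m f (Matrix.vecTail v)
        (fun i => by rw [Matrix.vecTail]; simpa using hf i.succ),
      mul_zero, sub_zero, hf 0, if_pos rfl, one_smul, map_zero] at this
    exact ih (Matrix.vecTail v) htail this

lemma ιMulti_mem_extPowerImage (m : ℕ) (W : Submodule k V) (b : Fin m → V)
    (hb : ∀ i, b i ∈ W) : ιMulti k m b ∈ extPowerImage k m W := by
  induction m with
  | zero =>
    rw [ιMulti_zero_apply]
    simpa [extPowerImage] using Submodule.one_le.mpr le_rfl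
  | succ m ih =>
    rw [ιMulti_succ_apply]
    have h1 : ι k (b 0) ∈ Submodule.map (ι k (M := V)) W :=
      Submodule.mem_map_of_mem (hb 0)
    have h2 := ih (Matrix.vecTail b) (fun i => hb i.succ)
    have := Submodule.mul_mem_mul h1 h2
    rwa [extPowerImage, pow_succ'] 

lemma extPowerImage_eq_span (m : ℕ) (W : Submodule k V) (b : Fin m → V)
    (hspan : Submodule.span k (Set.range b) = W) :
    extPowerImage k m W = Submodule.span k {ιMulti k m b} := by
  classical
  apply le_antisymm
  · rw [extPowerImage, ← hspan, Submodule.map_span, Submodule.span_pow]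
    rw [Submodule.span_le]
    intro x hx
    rw [Set.mem_pow] at hx
    obtain ⟨g, hg⟩ := hx
    have hchoice : ∀ i : Fin m, ∃ j : Fin m, (g i : ExteriorAlgebra k V) = ι k (b j) := by
      intro i
      obtain ⟨y, ⟨j, rfl⟩, hy⟩ := (g i).2
      exact ⟨j, hy.symm⟩
    choose j hj using hchoice
    have hx' : x = ιMulti k m (b ∘ j) := by
      rw [← hg, ιMulti_apply]
      exact congrArg (fun h : Fin m → ExteriorAlgebra k V => (List.ofFn h).prod) (funext hj)
    by_cases hinj : Function.Injective j
    · have hbij : Function.Bijective j := (Finite.injective_iff_bijective).mp hinj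
      let σ : Equiv.Perm (Fin m) := Equiv.ofBijective j hbij
      have : ιMulti k m (b ∘ j) = Equiv.Perm.sign σ • ιMulti k m b :=
        AlternatingMap.map_perm (ιMulti k m) b σ
      rw [hx', this]
      rcases Int.units_eq_one_or (Equiv.Perm.sign σ) with h | h <;> rw [h]
      · simpa using Submodule.mem_span_singleton_self _
      · have : ((-1 : ℤˣ) • ιMulti k m b) = -(ιMulti k m b) := by
          simp
        rw [this]
        exact Submodule.neg_mem _ (Submodule.mem_span_singleton_self _)
    · rw [Function.not_injective_iff] at hinj
      obtain ⟨i₁, i₂, heq, hne⟩ := hinj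
      have : ιMulti k m (b ∘ j) = 0 :=
        AlternatingMap.map_eq_zero_of_eq _ _ (by simp [Function.comp, heq]) hne
      rw [hx', this]
      exact Submodule.zero_mem _
  · rw [Submodule.span_le, Set.singleton_subset_iff]
    exact ιMulti_mem_extPowerImage m W b (fun i => hspan ▸ Submodule.subset_span ⟨i, rfl⟩)

end Aux

theorem unique_compatible_decoration (k : Type*) [Field k] (V : Type*)
    [AddCommGroup V] [Module k V] (n : ℕ) (A B B' C : Submodule k V)
    (hAB : A ≤ B) (hBC : B ≤ C) (hAB' : A ≤ B') (hB'C : B' ≤ C)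
    [FiniteDimensional k C]
    (hA : Module.finrank k A = n) (hB : Module.finrank k B = n + 1)
    (hB' : Module.finrank k B' = n + 1) (hC : Module.finrank k C = n + 2)
    (hne : B ≠ B')
    (ωA ωB ωC : ExteriorAlgebra k V)
    (hωA : ωA ∈ extPowerImage k n A) (hωA0 : ωA ≠ 0)
    (hωB : ωB ∈ extPowerImage k (n + 1) B) (hωB0 : ωB ≠ 0)
    (hωC : ωC ∈ extPowerImage k (n + 2) C) (hωC0 : ωC ≠ 0) :
    (∃! ω' : ExteriorAlgebra k V,
      ω' ∈ extPowerImage k (n + 1) B' ∧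
      ∃ v ∈ B, ∃ v' ∈ B',
        ωA * ExteriorAlgebra.ι k v = ωB ∧
        ωA * ExteriorAlgebra.ι k v' = ω' ∧
        ωA * ExteriorAlgebra.ι k v * ExteriorAlgebra.ι k v' = ωC) ∧
    (∀ ω' : ExteriorAlgebra k V,
      (ω' ∈ extPowerImage k (n + 1) B' ∧
      ∃ v ∈ B, ∃ v' ∈ B',
        ωA * ExteriorAlgebra.ι k v = ωB ∧
        ωA * ExteriorAlgebra.ι k v' = ω' ∧
        ωA * ExteriorAlgebra.ι k v * ExteriorAlgebra.ι k v' = ωC) → ω' ≠ 0) := by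
  classical
  open ExteriorAlgebra Submodule in
  haveI : FiniteDimensional k A := Submodule.finiteDimensional_of_le (hAB.trans hBC)
  haveI : FiniteDimensional k B := Submodule.finiteDimensional_of_le hBC
  haveI : FiniteDimensional k B' := Submodule.finiteDimensional_of_le hB'C
  -- basis of A
  obtain ⟨bA⟩ : Nonempty (Module.Basis (Fin n) k A) := ⟨Module.finBasisOfFinrankEq k A hA⟩
  set a : Fin n → V := fun i => (bA i : V) with ha_def
  have ha_ind : LinearIndependent k a :=
    bA.linearIndependent.map' A.subtype (Submodule.ker_subtype A)
  have ha_span : Submodule.span k (Set.range a) = A := by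
    have h1 : Set.range a = A.subtype '' Set.range bA := by
      rw [← Set.range_comp]; rfl
    rw [h1, ← Submodule.map_span, bA.span_eq, Submodule.map_top, Submodule.range_subtype]
  have ha_sub : ∀ i, a i ∈ A := fun i => (bA i).2
  -- v₀
  have hAltB : A < B := lt_of_le_of_ne hAB (by
    intro h; rw [h, hB] at hA; omega)
  obtain ⟨v₀, hv₀B, hv₀A⟩ := SetLike.exists_of_lt hAltB
  have hAltB' : A < B' := lt_of_le_of_ne hAB' (by
    intro h; rw [h, hB'] at hA; omega)
  obtain ⟨v₀', hv₀'B', hv₀'A⟩ := SetLike.exists_of_lt hAltB'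
  set g1 : Fin (n+1) → V := Fin.snoc a v₀ with hg1_def
  set g1' : Fin (n+1) → V := Fin.snoc a v₀' with hg1'_def
  have hg1_ind : LinearIndependent k g1 :=
    linearIndependent_fin_snoc.mpr ⟨ha_ind, by rwa [ha_span]⟩
  have hg1'_ind : LinearIndependent k g1' :=
    linearIndependent_fin_snoc.mpr ⟨ha_ind, by rwa [ha_span]⟩
  have hg1_range : Set.range g1 = insert v₀ (Set.range a) := range_snoc a v₀
  have hg1'_range : Set.range g1' = insert v₀' (Set.range a) := range_snoc a v₀'
  have hg1_le : Submodule.span k (Set.range g1) ≤ B := by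
    rw [Submodule.span_le, hg1_range]
    refine Set.insert_subset hv₀B ?_
    rintro _ ⟨i, rfl⟩; exact hAB (ha_sub i)
  have hg1_span : Submodule.span k (Set.range g1) = B :=
    Submodule.eq_of_le_of_finrank_eq hg1_le
      (by rw [finrank_span_eq_card hg1_ind, Fintype.card_fin, hB])
  have hg1'_le : Submodule.span k (Set.range g1') ≤ B' := by
    rw [Submodule.span_le, hg1'_range]
    refine Set.insert_subset hv₀'B' ?_
    rintro _ ⟨i, rfl⟩; exact hAB' (ha_sub i)
  have hg1'_span : Submodule.span k (Set.range g1') = B' :=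
    Submodule.eq_of_le_of_finrank_eq hg1'_le
      (by rw [finrank_span_eq_card hg1'_ind, Fintype.card_fin, hB'])
  -- v₀' ∉ B
  have hv₀'B : v₀' ∉ B := by
    intro hmem
    have hle : B' ≤ B := by
      rw [← hg1'_span, Submodule.span_le, hg1'_range]
      refine Set.insert_subset hmem ?_
      rintro _ ⟨i, rfl⟩; exact hAB (ha_sub i)
    exact hne ((Submodule.eq_of_le_of_finrank_eq hle (by rw [hB', hB])).symm)
  set g2 : Fin (n+2) → V := Fin.snoc g1 v₀' with hg2_def
  have hg2_ind : LinearIndependent k g2 :=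
    linearIndependent_fin_snoc.mpr ⟨hg1_ind, by rwa [hg1_span]⟩
  have hg2_le : Submodule.span k (Set.range g2) ≤ C := by
    rw [Submodule.span_le, range_snoc]
    refine Set.insert_subset (hB'C hv₀'B') ?_
    intro y hy
    exact hBC (hg1_le (Submodule.subset_span hy))
  have hg2_span : Submodule.span k (Set.range g2) = C :=
    Submodule.eq_of_le_of_finrank_eq hg2_le
      (by rw [finrank_span_eq_card hg2_ind, Fintype.card_fin, hC])
  -- products
  set π : ExteriorAlgebra k V := ExteriorAlgebra.ιMulti k n a with hπ_def
  have hπB : ExteriorAlgebra.ιMulti k (n+1) g1 = π * ExteriorAlgebra.ι k v₀ :=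
    ιMulti_snoc n a v₀
  have hπB' : ExteriorAlgebra.ιMulti k (n+1) g1' = π * ExteriorAlgebra.ι k v₀' :=
    ιMulti_snoc n a v₀'
  have hπC : ExteriorAlgebra.ιMulti k (n+2) g2
      = ExteriorAlgebra.ιMulti k (n+1) g1 * ExteriorAlgebra.ι k v₀' :=
    ιMulti_snoc (n+1) g1 v₀'
  have hπC0 : ExteriorAlgebra.ιMulti k (n+2) g2 ≠ 0 := ιMulti_ne_zero _ _ hg2_ind
  -- spans
  have eA : extPowerImage k n A = Submodule.span k {π} :=
    extPowerImage_eq_span n A a ha_span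
  have eB : extPowerImage k (n+1) B
      = Submodule.span k {ExteriorAlgebra.ιMulti k (n+1) g1} :=
    extPowerImage_eq_span (n+1) B g1 hg1_span
  have eB' : extPowerImage k (n+1) B'
      = Submodule.span k {ExteriorAlgebra.ιMulti k (n+1) g1'} :=
    extPowerImage_eq_span (n+1) B' g1' hg1'_span
  have eC : extPowerImage k (n+2) C
      = Submodule.span k {ExteriorAlgebra.ιMulti k (n+2) g2} :=
    extPowerImage_eq_span (n+2) C g2 hg2_span
  -- coefficients
  rw [eA, Submodule.mem_span_singleton] at hωA
  obtain ⟨cA, hcA⟩ := hωA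
  have hcA0 : cA ≠ 0 := by rintro rfl; rw [zero_smul] at hcA; exact hωA0 hcA.symm
  rw [eB, Submodule.mem_span_singleton] at hωB
  obtain ⟨cB, hcB⟩ := hωB
  have hcB0 : cB ≠ 0 := by rintro rfl; rw [zero_smul] at hcB; exact hωB0 hcB.symm
  rw [eC, Submodule.mem_span_singleton] at hωC
  obtain ⟨cC, hcC⟩ := hωC
  have hcC0 : cC ≠ 0 := by rintro rfl; rw [zero_smul] at hcC; exact hωC0 hcC.symm
  -- witnesses
  set v : V := (cB / cA) • v₀ with hv_def
  have hvB : v ∈ B := B.smul_mem _ hv₀B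
  set v' : V := (cC / cB) • v₀' with hv'_def
  have hv'B' : v' ∈ B' := B'.smul_mem _ hv₀'B'
  set ω' : ExteriorAlgebra k V := (cA * (cC / cB)) • ExteriorAlgebra.ιMulti k (n+1) g1'
    with hω'_def
  have e1 : ωA * ExteriorAlgebra.ι k v = ωB := by
    rw [← hcA, ← hcB, hv_def, map_smul, smul_mul_smul_comm, hπB]
    congr 1
    field_simp
  have e2 : ωA * ExteriorAlgebra.ι k v' = ω' := by
    rw [← hcA, hv'_def, map_smul, smul_mul_smul_comm, hω'_def, hπB']
  have e3 : ωA * ExteriorAlgebra.ι k v * ExteriorAlgebra.ι k v' = ωC := by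
    rw [e1, ← hcB, ← hcC, hv'_def, map_smul, smul_mul_smul_comm, hπC]
    congr 1
    field_simp
  have hω'mem : ω' ∈ extPowerImage k (n+1) B' := by
    rw [eB', hω'_def]
    exact Submodule.smul_mem _ _ (Submodule.mem_span_singleton_self _)
  -- zero lemma for s ∈ span (range a)
  have hAs : ∀ s, s ∈ Submodule.span k (Set.range a) →
      π * ExteriorAlgebra.ι k s = 0 := by
    intro s hs
    rw [← ιMulti_snoc]
    exact AlternatingMap.map_linearDependent _ _
      (fun h => (linearIndependent_fin_snoc.mp h).2 hs)
  have hBs : ∀ s, s ∈ A →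
      ExteriorAlgebra.ιMulti k (n+1) g1 * ExteriorAlgebra.ι k s = 0 := by
    intro s hs
    rw [← ιMulti_snoc]
    exact AlternatingMap.map_linearDependent _ _
      (fun h => (linearIndependent_fin_snoc.mp h).2 (by rw [hg1_span]; exact hAB hs))
  constructor
  · refine ⟨ω', ⟨hω'mem, v, hvB, v', hv'B', e1, e2, e3⟩, ?_⟩
    rintro y ⟨hymem, w, hwB, w', hw'B', q1, q2, q3⟩
    have hωBw' : ωB * ExteriorAlgebra.ι k w' = ωC := by rw [← q1]; exact q3
    have hωBv' : ωB * ExteriorAlgebra.ι k v' = ωC := by rw [← e1]; exact e3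
    have hu : ωB * ExteriorAlgebra.ι k (w' - v') = 0 := by
      rw [map_sub, mul_sub, hωBw', hωBv', sub_self]
    have humem : w' - v' ∈ Submodule.span k (insert v₀' (Set.range a)) := by
      rw [← hg1'_range, hg1'_span]
      exact Submodule.sub_mem _ hw'B' hv'B'
    rw [Submodule.mem_span_insert] at humem
    obtain ⟨t, s, hsA, hts⟩ := humem
    have ht0 : t = 0 := by
      have hcomp : ωB * ExteriorAlgebra.ι k (w' - v')
          = (t * cB) • ExteriorAlgebra.ιMulti k (n+2) g2 := by
        rw [hts, map_add, map_smul, mul_add, ← hcB, mul_smul_comm, smul_mul_assoc,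
          smul_mul_assoc, hBs s (ha_span ▸ hsA), smul_zero, add_zero, hπC, smul_smul]
      rw [hu] at hcomp
      have := (smul_eq_zero.mp hcomp.symm).resolve_right hπC0
      rcases mul_eq_zero.mp this with h | h
      · exact h
      · exact absurd h hcB0
    have hts' : w' - v' = s := by rw [hts, ht0, zero_smul, zero_add]
    have hy0 : y - ω' = 0 := by
      rw [← q2, ← e2, ← mul_sub, ← map_sub, hts', ← hcA, smul_mul_assoc,
        hAs s hsA, smul_zero]
    exact sub_eq_zero.mp hy0
  · rintro ω'' ⟨_, w, hwB, w', hw'B', q1, q2, q3⟩ h0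
    rw [h0] at q2
    apply hωC0
    have hswap : ExteriorAlgebra.ι k w * ExteriorAlgebra.ι k w'
        = -(ExteriorAlgebra.ι k w' * ExteriorAlgebra.ι k w) :=
      eq_neg_of_add_eq_zero_left (ExteriorAlgebra.ι_add_mul_swap w w')
    rw [← q3, mul_assoc, hswap, mul_neg, ← mul_assoc, q2, zero_mul, neg_zero]
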